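/- Every word w over {a, b} of length at most 9 is an isoterm for UT_2 (equivalently, for the bicyclic monoid): w ∼_2 v implies v = w. -/

import Mathlib

/-- Tropical (max-plus) matrix multiplication over `ℝ ∪ {-∞}`. -/
noncomputable def tmul {n : ℕ} (A B : Matrix (Fin n) (Fin n) EReal) :
    Matrix (Fin n) (Fin n) EReal :=
  fun i j => ⨆ k, A i k + B k j

/-- The tropical identity matrix: `0` on the diagonal, `-∞` elsewhere. -/
noncomputable def tOne {n : ℕ} : Matrix (Fin n) (Fin n) EReal :=
  fun i j => if i = j then 0 else ⊥

/-- Tropical product of a list of matrices. -/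
noncomputable def tProd {n : ℕ} (l : List (Matrix (Fin n) (Fin n) EReal)) :
    Matrix (Fin n) (Fin n) EReal :=
  l.foldr tmul tOne

/-- A matrix is upper triangular if all entries below the diagonal are `-∞`. -/
def IsUT {n : ℕ} (A : Matrix (Fin n) (Fin n) EReal) : Prop :=
  ∀ i j : Fin n, j < i → A i j = ⊥

/-- `w = v` is a semigroup identity for `UT_n`: every assignment of upper
triangular tropical matrices to the letters gives equal products. -/
noncomputable def UTId (n : ℕ) {σ : Type*} (w v : List σ) : Prop :=
  ∀ φ : σ → Matrix (Fin n) (Fin n) EReal, (∀ s, IsUT (φ s)) →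
    tProd (w.map φ) = tProd (v.map φ)


namespace IsotermAux

noncomputable def e (m : WithBot ℤ) : EReal := WithBot.recBotCoe ⊥ (fun n : ℤ => ((n : ℝ) : EReal)) m
@[simp] lemma e_bot : e ⊥ = ⊥ := rfl
@[simp] lemma e_coe (n : ℤ) : e (n : WithBot ℤ) = ((n : ℝ) : EReal) := rfl
lemma e_zero : e 0 = 0 := by
  simpa using e_coe 0
lemma e_add (a b : WithBot ℤ) : e (a + b) = e a + e b := by
  induction a using WithBot.recBotCoe with
  | bot => simp
  | coe m =>
    induction b using WithBot.recBotCoe with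
    | bot => simp
    | coe n => rw [← WithBot.coe_add, e_coe, e_coe, e_coe, Int.cast_add, EReal.coe_add]
lemma coe_mono : Monotone (fun r : ℝ => (r : EReal)) := fun _ _ h => EReal.coe_le_coe_iff.2 h
lemma e_max (a b : WithBot ℤ) : e (max a b) = max (e a) (e b) := by
  induction a using WithBot.recBotCoe with
  | bot => rw [max_eq_right bot_le, e_bot, max_eq_right bot_le]
  | coe m =>
    induction b using WithBot.recBotCoe with
    | bot => rw [max_eq_left bot_le, e_bot, max_eq_left bot_le]
    | coe n =>
      have h1 : max (m : WithBot ℤ) (n : WithBot ℤ) = ((max m n : ℤ) : WithBot ℤ) := by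
        rcases le_total m n with h | h
        · rw [max_eq_right h, max_eq_right (WithBot.coe_le_coe.2 h)]
        · rw [max_eq_left h, max_eq_left (WithBot.coe_le_coe.2 h)]
      rw [h1, e_coe, e_coe, e_coe, Int.cast_mono.map_max, coe_mono.map_max]
lemma e_inj : Function.Injective e := by
  intro a b hab
  induction a using WithBot.recBotCoe <;> induction b using WithBot.recBotCoe <;>
    simp_all [EReal.coe_eq_coe_iff]

lemma isup2 (f : Fin 2 → EReal) : (⨆ k, f k) = max (f 0) (f 1) := by
  apply le_antisymm
  · refine iSup_le fun k => ?_
    fin_cases k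
    · exact le_max_left _ _
    · exact le_max_right _ _
  · exact max_le (le_iSup f 0) (le_iSup f 1)

lemma tmul_apply (A B : Matrix (Fin 2) (Fin 2) EReal) (i j : Fin 2) :
    tmul A B i j = max (A i 0 + B 0 j) (A i 1 + B 1 j) := by
  show (⨆ k : Fin 2, A i k + B k j) = _
  rw [isup2]

lemma tProd_cons {n : ℕ} (A : Matrix (Fin n) (Fin n) EReal) (l) :
    tProd (A :: l) = tmul A (tProd l) := rfl

def dsum (x : Bool → WithBot ℤ) : List Bool → WithBot ℤ
  | [] => 0
  | c :: t => x c + dsum x t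

def gtop (x y z : Bool → WithBot ℤ) : List Bool → WithBot ℤ
  | [] => ⊥
  | c :: t => max (y c + dsum z t) (x c + gtop x y z t)

noncomputable def phi (x y z : Bool → WithBot ℤ) (s : Bool) : Matrix (Fin 2) (Fin 2) EReal :=
  !![e (x s), e (y s); ⊥, e (z s)]

lemma phi_UT (x y z : Bool → WithBot ℤ) (s : Bool) : IsUT (phi x y z s) := by
  intro i j hij
  fin_cases i <;> fin_cases j <;> simp_all [phi]

lemma max_bot_r (a : EReal) : max a ⊥ = a := max_eq_left bot_le
lemma max_bot_l (a : EReal) : max ⊥ a = a := max_eq_right bot_le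

lemma bridge (x y z : Bool → WithBot ℤ) (w : List Bool) :
    tProd (w.map (phi x y z)) = !![e (dsum x w), e (gtop x y z w); ⊥, e (dsum z w)] := by
  induction w with
  | nil =>
    funext i j
    fin_cases i <;> fin_cases j <;>
      simp [tProd, tOne, dsum, gtop, e_zero]
  | cons c t ih =>
    rw [List.map_cons, tProd_cons, ih]
    funext i j
    fin_cases i <;> fin_cases j <;>
      simp [tmul_apply, phi, dsum, gtop, e_add, e_max, EReal.add_bot, EReal.bot_add,
        max_bot_r, max_bot_l, max_comm]

end IsotermAux
namespace IsotermAux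

lemma key_eq (w v : List Bool) (h : UTId 2 w v) (x y z : Bool → WithBot ℤ) :
    dsum x w = dsum x v ∧ gtop x y z w = gtop x y z v := by
  have H := h (phi x y z) (phi_UT x y z)
  rw [bridge, bridge] at H
  constructor
  · apply e_inj
    have h00 := congrFun (congrFun H 0) 0
    simpa using h00
  · apply e_inj
    have h01 := congrFun (congrFun H 0) 1
    simpa using h01

def xf (p q : ℤ) : Bool → WithBot ℤ := fun s => if s then (p : ℤ) else (q : ℤ)
def yf (l : Bool) : Bool → WithBot ℤ := fun s => if s = l then 0 else ⊥
def z0 : Bool → WithBot ℤ := fun _ => 0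
def oneF : Bool → WithBot ℤ := fun _ => 1

def feats : List (ℤ × ℤ × Bool) :=
  [(-9,5,false),(7,-3,false),(3,-5,true),(-4,9,true),(-8,9,true),(4,-3,true),(-9,1,false),(-2,7,true)]

def inv (w : List Bool) : List (WithBot ℤ) :=
  dsum oneF w :: dsum (xf 1 0) w ::
    feats.map (fun f => gtop (xf f.1 f.2.1) (yf f.2.2) z0 w)

lemma inv_eq (w v : List Bool) (h : UTId 2 w v) : inv w = inv v := by
  unfold inv
  refine congrArg₂ List.cons (key_eq w v h oneF oneF oneF).1
    (congrArg₂ List.cons (key_eq w v h (xf 1 0) oneF oneF).1 ?_)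
  exact List.map_congr_left (fun f _ => (key_eq w v h _ _ _).2)

def encF : WithBot ℤ → ℕ := WithBot.recBotCoe 0 (fun n => (n + 163).toNat)
def keyN (w : List Bool) : ℕ := (inv w).foldr (fun a acc => encF a + 326 * acc) 0

lemma keyN_eq (w v : List Bool) (h : UTId 2 w v) : keyN w = keyN v :=
  congrArg (fun l => l.foldr (fun a acc => encF a + 326 * acc) 0) (inv_eq w v h)

def wordsE : ℕ → List (List Bool)
  | 0 => [[]]
  | n+1 => (wordsE n).flatMap (fun w => [true :: w, false :: w])

def allW : List (List Bool) := (List.range 9).flatMap (fun n => wordsE (n+1))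

lemma mem_wordsE (w : List Bool) : w ∈ wordsE w.length := by
  induction w with
  | nil => simp [wordsE]
  | cons c t ih =>
    simp only [List.length_cons, wordsE, List.mem_flatMap]
    exact ⟨t, ih, by cases c <;> simp⟩

lemma mem_allW (w : List Bool) (hw : w ≠ []) (hl : w.length ≤ 9) : w ∈ allW := by
  have h1 : 0 < w.length := List.length_pos_iff.2 hw
  rw [allW, List.mem_flatMap]
  refine ⟨w.length - 1, by rw [List.mem_range]; omega, ?_⟩
  have : w.length - 1 + 1 = w.length := by omega
  rw [this]
  exact mem_wordsE w

lemma dsum_one (w : List Bool) : dsum oneF w = ((w.length : ℤ) : WithBot ℤ) := by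
  induction w with
  | nil => simp [dsum]
  | cons c t ih =>
    rw [dsum, ih, oneF, List.length_cons]
    push_cast
    exact add_comm _ _

lemma len_eq (w v : List Bool) (h : UTId 2 w v) : v.length = w.length := by
  have h1 := (key_eq w v h oneF oneF oneF).1
  rw [dsum_one, dsum_one] at h1
  exact_mod_cast h1.symm

end IsotermAux
namespace IsotermAux

def nodupB : ℕ → List ℕ → Bool
  | _, [] => true
  | _, [_] => true
  | 0, _ :: _ :: _ => false
  | fuel+1, l@(_ :: _ :: _) =>
      nodupB fuel ((l.filter (fun k => k % 2 == 0)).map (fun k => k / 2)) &&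
      nodupB fuel ((l.filter (fun k => k % 2 == 1)).map (fun k => k / 2))

lemma nodup_of_filters (l : List ℕ) (p : ℕ → Bool)
    (h1 : (l.filter p).Nodup) (h2 : (l.filter (fun a => !p a)).Nodup) : l.Nodup := by
  rw [List.nodup_iff_count_le_one] at h1 h2 ⊢
  intro a
  cases hpa : p a with
  | true =>
    have := h1 a
    rwa [List.count_filter hpa] at this
  | false =>
    have := h2 a
    rwa [List.count_filter (by simp [hpa])] at this

lemma nodupB_sound : ∀ (fuel : ℕ) (l : List ℕ), nodupB fuel l = true → l.Nodup := by
  intro fuel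
  induction fuel with
  | zero =>
    intro l h
    match l, h with
    | [], _ => exact List.nodup_nil
    | [x], _ => simp
    | _ :: _ :: _, h => simp [nodupB] at h
  | succ n ih =>
    intro l h
    match l, h with
    | [], _ => exact List.nodup_nil
    | [x], _ => simp
    | a :: b :: t, h =>
      rw [nodupB, Bool.and_eq_true] at h
      refine nodup_of_filters _ (fun k => k % 2 == 0) ?_ ?_
      · exact List.Nodup.of_map _ (ih _ h.1)
      · have h2 := List.Nodup.of_map _ (ih _ h.2)
        have : (a :: b :: t).filter (fun k => !(k % 2 == 0)) =
            (a :: b :: t).filter (fun k => k % 2 == 1) := by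
          apply List.filter_congr
          intro x _
          rcases Nat.mod_two_eq_zero_or_one x with hx | hx <;> simp [hx]
        rw [this]
        exact h2

end IsotermAux
namespace IsotermAux

def keysOf : ℕ → List ℕ
  | 0 => [53301]
  | 1 => [6778757595232358954406668, 20793538696672222807466]
  | 2 => [6778759160480516340490627, 7090659512582445090041425, 6798403024430442467663397, 20921106418737662345823]
  | 3 => [6778760725728673726574586, 7090661077830602476125384, 7006338803927892756333836, 7381895458957924442460374, 6797256480180011144249920, 7090659512582445228625330, 6798530592152507907201754, 21048674140803101884180]
  | 4 => [6778762290976831112658545, 7090662643078759862209343, 7006340369176027553241443, 7381897024206081828544333, 6922018103675723404397927, 7298595292079895517295769, 7297575532927490332853217, 7673131405333403794879323, 6796109935929579820836443, 7090661077830602857231121, 7006338803927892894917741, 7381895458957924477106351, 6797384047902076583788277, 7090659512582445228731607, 6798658159874573346740111, 21176241862868541422537]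
  | 5 => [6778763856224988498742504, 7090664208326917248293302, 7006341934424184939325402, 7381898589454239214628292, 6922019668923858201305534, 7298596857328030314203376, 7297576315551552084013096, 7673132970581561180963282, 6837697404634943812690722, 7215422701326315117379128, 7214274583425343183588180, 7589831238455374765776790, 7213254824272915409969276, 7589704453357427654383070, 7588812653239118784952374, 7964367351708883147298272, 6794963391679148497422966, 7090662643078760485836912, 7006340369176027934347180, 7381897024206082105712142, 6922018103675723542981832, 7298595292079895655879674, 7297575532927490367499194, 7673131405333403794879324, 6796237503651645260374800, 7090661077830602857231122, 7006338803927892895024018, 7381895458957924477212628, 6797511615624142023326634, 7090659512582445229262988, 6798785727596638786278468, 21303809584933980960894]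
  | 6 => [6778765421473145884826463, 7090665773575074634377261, 7006343499672342325409361, 7381900154702396600712251, 6922021234172015587389493, 7298598422576187700287335, 7297577880799675586332527, 7673134535829718567047241, 6837698969883078609598329, 7215424266574449914286735, 7214276148673466685907611, 7589832803703509562684397, 7213255606896977161129155, 7589705235981489405542949, 7588812653239118784952701, 7964368916957040533382231, 6794963782991179373003069, 7132250111784124477691191, 7131101992671740194495187, 7506658647701794365860149, 7129953881972830178659695, 7506531071577345944550113, 7505510921112909780589857, 7881067184830854083549763, 7128934122820402405040791, 7506531854201441683412121, 7505383744702875320675481, 7880940399732906902864091, 7504491944584543862068433, 7880814005946990667475251, 7880049773550747237051531, 8255603298084362499717221, 6793816847428717174009489, 7090664208326918114442703, 7006341934424185562952971, 7381898589454239734317933, 6922019668923858582411271, 7298596857328030695309113, 7297576315551552361180905, 7673132970581561354193163, 6837697404634943951274627, 7215422701326315255963033, 7214274583425343322172085, 7589831238455374904360695, 7213254824272915444615253, 7589704453357427689029047, 7588812653239118784952375, 7964367351708883147298273, 6795090959401213936961323, 7090662643078760485836913, 7006340369176027934347181, 7381897024206082105712143, 6922018103675723543088109, 7298595292079895655879675,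 7297575532927490367605471, 7673131405333403794985601, 6796365071373710699913157, 7090661077830602857231123, 7006338803927892895555399, 7381895458957924477744009, 6797639183346207462864991, 7090659512582445229794369, 6798913295318704225816825, 21431377306999420499251]
  | 7 => [6778766986721303270910422, 7090667338823232020461220, 7006345064920499711493320, 7381901719950553986796210, 6922022799420172973473452, 7298599987824345086371294, 7297579446047821677828310, 7673136101077875953131200, 6837700535131235995682288, 7215425831822607300370694, 7214277713921612777403394, 7589834368951666948768356, 7213257172145100663448586, 7589706801229612907862380, 7588813827175211411692356, 7964370482205197919466190, 6794965348239314169910676, 7132251677032259274598798, 7131103557919874991402794, 7506660212949929162767756, 7129955447220953680979126, 7506532636825469446869544, 7505512095049002407329512, 7881068750078988880457370, 7128934905444464156200670, 7506532636825503434572000, 7505384527326937071835360, 7880941182356968654023970, 7504491944584543862068760, 7880814005946990667475578, 7880049773550747237051858, 8255604863332519885801180, 6793817238740748049589592, 7090664599638948990022806, 7047929403129549554807250, 7423486058159603726172212, 7046781292419570842559278, 7423358480823742955457120, 7422337939047264621328912, 7797894594077273614341170, 7045633182921004479716362, 7423358479623421891640896, 7422210362922793610842524, 7797767017952825193031134,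 7421190212458334857705916, 7797639841542847102119710, 7796748041424538198043038, 8172303131206333435968712, 7044613423768576706097458, 7423359262247517630502904, 7422211145546866760528180, 7797767800576920931893142, 7421063036048300397791540, 7797640232854878081531138, 7796620473702472793256934, 8172176346108386220637064, 7420171235929968939184492, 7797641406791004695972922, 7796493297292438333767662, 8172049952322469915956272, 7795729064896172314167590, 8171923558536553680567432, 8171286893862375689150688, 8546839244459841852136170, 6792670303178285850596012, 7090665773575075743048494, 7006343499672343191558762, 7381900154702397362923724, 6922021234172016211017062, 7298598422576188323914904, 7297577880799676106022168, 7673134535829718982798954, 6837698969883078990704066, 7215424266574450295392472, 7214276148673467067013348, 7589832803703509943790134, 7213255606896977438296964, 7589705235981489682710758, 7588812653239118958182582, 7964368916957040602674184, 6794963782991179511586974, 7132250111784124616275096, 7131101992671740333079092, 7506658647701794504444054, 7129953881972830317243600, 7506531071577346083134018, 7505510921112909919173762, 7881067184830854152841716, 7128934122820402439686768, 7506531854201441718058098, 7505383744702875355321458, 7880940399732906937510068, 7504491944584543862068434, 7880814005946990667475252, 7880049773550747237051532, 8255603298084362499717222, 6793944415150782613547846, 7090664208326918114442704, 7006341934424185562952972,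 7381898589454239734317934, 6922019668923858582411272, 7298596857328030695309114, 7297576315551552361180906, 7673132970581561354193164, 6837697404634943951380904, 7215422701326315255963034, 7214274583425343322172086, 7589831238455374904360696, 7213254824272915444721530, 7589704453357427689135324, 7588812653239118785058652, 7964367351708883147404550, 6795218527123279376499680, 7090662643078760485836914, 7006340369176027934347182, 7381897024206082105712144, 6922018103675723543619490, 7298595292079895656092228, 7297575532927490368136852, 7673131405333403795516982, 6796492639095776139451514, 7090661077830602857443676, 7006338803927892896086780, 7381895458957924478275390, 6797766751068272902403348, 7090659512582445230325750, 6799040863040769665355182, 21558945029064860037608]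
  | 8 => [6778768551969460656994381, 7090668904071389406545179, 7006346630168657097577279, 7381903285198711372880169, 6922024364668330359557411, 7298601553072502472455253, 7297581011295979063912269, 7673137666326033339215159, 6837702100379393381766247, 7215427397070764686454653, 7214279279169770163487353, 7589835934199824334852315, 7213258737393246754944369, 7589708366477758999358163, 7588815392423334914011787, 7964372047453355305550149, 6794966913487471555994635, 7132253242280416660682757, 7131105123168032377486753, 7506661778198086548851715, 7129957012469099772474909, 7506534202073615538365327, 7505513660297125909648943, 7881070315327146266541329, 7128936470692587658520101, 7506534202073626936891431, 7505386092575060574154791, 7880942747605092156343401, 7504493118520636488808415, 7880815179883083294215233, 7880049773550747237052185, 8255606428580677271885139, 6793818803988882846497199, 7090666164887083786930413, 7047930968377684351714857, 7423487623407738523079819, 7046782857667705639466885, 7423360046071877752364727, 7422339504295388123648343, 7797896159325408411248777, 7045634748169127982035793, 7423360044871545393960327, 7422211928170917113161955, 7797768583200948695350565, 7421191386394427484445571, 7797641015478939728859365, 7796748041424538198043365, 8172304696454468232876319, 7044614206392638457257337, 7423360044871579381662783, 7422211928170928511688059, 7797768583200982683053021, 7421063818672362148951419, 7797641015478939832691017,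 7796620473702472793257261, 8172177128732447971796943, 7420171235929968939184819, 7797641406791004695973249, 7796493297292438333767989, 8172049952322469915956599, 7795729064896172314167917, 8171923558536553680567759, 8171286893862375689151015, 8546840809707999238220129, 6792670694490316726176115, 7090666164887106618628597, 7006343890984374067138865, 7381900546014428238503827, 6963608702877380202871341, 7340185891281552315769183, 7339165349505040097876447, 7714722004535082974653233, 6962460593375109215106697, 7340185890070162555540479, 7339037772169179327161355, 7714594427199222203938141, 7338017230392689698444971, 7714466859477201942858765, 7713573885422800342750813, 8089130540452752862822191, 6961312483876542852263781, 7340185890070185144716831, 7339037770968846968756955, 7714594425998901140121917, 7337889660269936952921463, 7714466851074796371804457, 7713446309298329332264425, 8089002964328304441512155, 7336869509805478199784855, 7714467242386861131148761, 7713319132888294768412121, 8088875787918326350600731, 7712427332769963275159097, 8088749394132410080565915, 8087985161736166650142195, 8463539077581812788387661, 6960292724724115078644877, 7340186672694280883578839, 7339038553592942707618963, 7714595208622996878983925, 7337890442894010102607119, 7714467633698869521490113, 7713447091922391187361905, 8089003746952400180374163, 7336742333395443739870479, 7714467633698892110666465, 7713319524200325747823549, 8088876179230357330012159, 7712299765047897870372993,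 8088749394132410114786787, 8087857594014101210710115, 8463412292483865573056013, 7335850533277112281263431, 7714468807635018725108249, 7713320698136429773088981, 8088877353166483944453943, 7712172588637863410883721, 8088749785444441094304491, 8087730026292035806349115, 8463285898697949233729245, 7711408356241597391283649, 8088750959380567708746275, 8087602849882001346859843, 8463159504912032929048453, 8086966185207800766266747, 8463033111126116693659613, 8462524014174004141249845, 8838075190835321204555119, 6791523758927854527182535, 7090667338823233371654285, 7006345064920500820164553, 7381901719950554991529515, 6922022799420173839622853, 7298599987824345952520695, 7297579446047822440039783, 7673136101077876611404745, 6837700535131236619309857, 7215425831822607923998263, 7214277713921613401030963, 7589834368951667572395925, 7213257172145101183138227, 7589706801229613427552021, 7588813827175211827444069, 7964370482205198231279975, 6794965348239314551016413, 7132251677032259655704535, 7131103557919875372508531, 7506660212949929543873493, 7129955447220954062084863, 7506532636825469827975281, 7505512095049002788435249, 7881068750078989192271155, 7128934905444464433368479, 7506532636825503711739809, 7505384527326937349003169, 7880941182356968931191779, 7504491944584544035298641, 7880814005946990840705459, 7880049773550747306343811, 8255604863332519885801181, 6793817238740748188173497, 7090664599638949128606711, 7047929403129549693391155, 7423486058159603864756117,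 7046781292419570981143183, 7423358480823743094041025, 7422337939047264759912817, 7797894594077273752925075, 7045633182921004618300267, 7423358479623422030224801, 7422210362922793749426429, 7797767017952825331615039, 7421190212458334996289821, 7797639841542847240703615, 7796748041424538267334991, 8172303131206333435968713, 7044613423768576740743435, 7423359262247517665148881, 7422211145546866795174157, 7797767800576920966539119, 7421063036048300432437517, 7797640232854878116177115, 7796620473702472827902911, 8172176346108386220637065, 7420171235929968939184493, 7797641406791004695972923, 7796493297292438333767663, 8172049952322469915956273, 7795729064896172314167591, 8171923558536553680567433, 8171286893862375689150689, 8546839244459841852136171, 6792797870900351290134369, 7090665773575075743048495, 7006343499672343191558763, 7381900154702397362923725, 6922021234172016211017063, 7298598422576188323914905, 7297577880799676106022169, 7673134535829718982798955, 6837698969883078990704067, 7215424266574450295392473, 7214276148673467067013349, 7589832803703509943790135, 7213255606896977438296965, 7589705235981489682710759, 7588812653239118958182583, 7964368916957040602674185, 6794963782991179511693251, 7132250111784124616275097, 7131101992671740333079093, 7506658647701794504444055, 7129953881972830317243601, 7506531071577346083134019, 7505510921112909919173763, 7881067184830854152841717, 7128934122820402439793045, 7506531854201441718058099, 7505383744702875355427735,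 7880940399732906937616345, 7504491944584543862174711, 7880814005946990667581529, 7880049773550747237157809, 8255603298084362499823499, 6794071982872848053086203, 7090664208326918114442705, 7006341934424185562952973, 7381898589454239734317935, 6922019668923858582411273, 7298596857328030695309115, 7297576315551552361180907, 7673132970581561354193165, 6837697404634943951912285, 7215422701326315255963035, 7214274583425343322384639, 7589831238455374904573249, 7213254824272915445252911, 7589704453357427689666705, 7588812653239118785590033, 7964367351708883147935931, 6795346094845344816038037, 7090662643078760485836915, 7006340369176027934559735, 7381897024206082105924697, 6922018103675723544150871, 7298595292079895656623609, 7297575532927490368668233, 7673131405333403796048363, 6796620206817841578989871, 7090661077830602857975057, 7006338803927892896618161, 7381895458957924478806771, 6797894318790338341941705, 7090659512582445230857131, 6799168430762835104893539, 21686512751130299575965]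
  | 9 => [6778770117217618043078340, 7090670469319546792629138, 7006348195416814483661238, 7381904850446868758964128, 6922025929916487745641370, 7298603118320659858539212, 7297582576544136449996228, 7673139231574190725299118, 6837703665627550767850206, 7215428962318922072538612, 7214280844417927549571312, 7589837499447981720936274, 7213260302641404141028328, 7589709931725916385442122, 7588816957671458416331218, 7964373612701512691634108, 6794968478735628942078594, 7132254807528574046766716, 7131106688416189763570712, 7506663343446243934935674, 7129958577717257158558868, 7506535767321772924449286, 7505515225545249411968374, 7881071880575303652625288, 7128938035940733750015884, 7506535767321773028387214, 7505387657823184076474222, 7880944312853238247839184, 7504494683768759991127846, 7880816745131206796534664, 7880051338798870739371616, 8255607993828834657969098, 6793820369237040232581158, 7090667730135241173014372, 7047932533625841737798816, 7423489188655895909163778, 7046784422915863025550844, 7423361611320035138448686, 7422341069543511625967774, 7797897724573565797332736, 7045636313417274073531576, 7423361610119691485456110, 7422213493419040615481386, 7797770148449094786846348, 7421192951642550986765002, 7797642580727063231178796, 7796749606672661700362796, 8172306261702625618960278, 7044615771640761959576768, 7423361610119702883982214, 7422213493419052014007490, 7797770148449106185372452, 7421065383920485651270850, 7797642580727063335010448,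 7796622038950596295576692, 8172178693980571474116374, 7420172409866061565924474, 7797642580727097322712904, 7796494471228530960507644, 8172051126258562542696254, 7795729064896172314168244, 8171923558536553680568086, 8171286893862375689151342, 8546842374956156624304088, 6792672259738451523083722, 7090667730135241415536204, 7006345456232508864046472, 7381902111262563035411434, 6963610268125514999778948, 7340187456529687112676790, 7339166914753163600195878, 7714723569783217771560840, 6962462158623244012014304, 7340187455318297352448086, 7339039337417302829480786, 7714595992447357000845748, 7338018795640813200764402, 7714468424725325445178196, 7713575450670923845070244, 8089132105700887659729798, 6961314049124666354583212, 7340187455318308647036262, 7339039336216970471076386, 7714595991247024642441348, 7337891225518060455240894, 7714468416322919874123888, 7713447874546452834583856, 8089004529576427943831586, 7336870683741570826524510, 7714468416322953757888416, 7713320306824387395151776, 8088876961854418977340386, 7712427332769963275159424, 8088749394132410080566242, 8087985161736166650142522, 8463540642829947585295268, 6960293507348176829804756, 7340187455318342634738718, 7339039336217004458778842, 7714595991247058630143804, 7337891225518071853766998, 7714468416322931272649992, 7713447874546452938521784, 8089004529576461931534042, 7336743116019505491030358, 7714468416322953861826344, 7713320306824387498983428, 8088876961854419081172038, 7712299765047897870373320,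 8088749394132410114787114, 8087857594014101210710442, 8463413075107927324215892, 7335850533277112281263758, 7714468807635018725108576, 7713320698136429773089308, 8088877353166483944454270, 7712172588637863410884048, 8088749785444441094304818, 8087730026292035806349442, 8463285898697949233729572, 7711408356241597391283976, 8088750959380567708746602, 8087602849882001346860170, 8463159504912032929048780, 8086966185207800766267074, 8463033111126116693659940, 8462524014174004141250172, 8838076756083478590639078, 6791524150239885402762638, 7090667730135264247234388, 7006345456232531695744656, 7381902111262585867109618, 6922023190732204715202956, 7298600379136376828100798, 7297579837359853315619886, 7673136492389907486984848, 6879288003836600611164136, 7257013300527971915852542, 7255865182626977392885242, 7631421837657031564250204, 7254844640850465174992506, 7631294269934977419406300, 7630401295880575819298348, 8005957950910562223134254, 6878139894338011659144868, 7257013300524289880107166, 7255865181415587632656538, 7631421836445641804021500, 7254717070716666322232870, 7631294260321182088123288, 7630273718544715048583256, 8005830373574701452419162, 7253696528940176693516486, 7631294260321215971887816, 7630146150822649609151176, 8005702805852681191339786, 7629253176768225419866872, 8005575238130672225273690, 8004811005734428690912042, 8380366486828232145949188, 6876991784839445296301952, 7257013300524312469283518, 7255865181415610221832890, 7631421836445664393197852,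 7254717070716677616821046, 7631294259120849729718888, 7630273717344371395590680, 8005830372374380388602938, 7253568961218111253978130, 7631294257920528665902664, 7630146142420244038096868, 8005702797450275620285478, 7629125600643754409380484, 8005575229728266653794278, 8004683429609957680425654, 8380238910703783724639152, 7252548810753652500841522, 7631294649232593425246968, 7630146533732286208264820, 8005703188762340379629782, 7628998424233719845528180, 8005575621040297529267778, 8004555861887892240993574, 8380111734293805633727728, 7628106624115388352275156, 8005576794976424109063586, 8004428685477857746858326, 8379985340507889329046936, 8003664453081591727258254, 8379858946721973093658096, 8379222282047795102241352, 8754775023957292140806610, 6875972025687017522683048, 7257014083148408208145526, 7255865964039705960694898, 7631422619069760132059860, 7254717853340773355683054, 7631295041744945468580896, 7630274499968433250688160, 8005831154998476127464946, 7253569743842184403663786, 7631295040544601815588320, 7630146925044305893194348, 8005703580074348769971134, 7629126383267816264477964, 8005576012352328508891758, 8004683429609957784363582, 8380239693327879428855184, 7252421634343618040927146, 7631295040544624404764672, 7630146925044317187782524, 8005703580074371359147486, 7628998815545750824939608, 8005576012352328508785482, 8004555861887892344825226, 8380112125605836578493180, 7627979056393322947489052, 8005576794976424143709562, 8004428685477857781079198,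 8379985340507889363267808, 8003536885359526287826174, 8379858946721973093232992, 8379094714325729662809272, 8754648238859344925474962, 7251529834225286582320098, 7631296214480751019206456, 7630148098980443802224308, 8005704754010497973589270, 7628999989481854850205040, 8005577186288432534050914, 8004556644511954199922706, 8380113299541963192934964, 7627851879983288487999780, 8005577186288455123227266, 8004429076789888760596902, 8379985731819920342785512, 8003409317637460883465174, 8379858946721973127878968, 8378967146603664223802296, 8754521845073428586148194, 7627087647587022468399708, 8005578360224581737669050, 8004430250725992785862334, 8379986905756046957227296, 8003282141227426423975902, 8379859338034004107396672, 8378839578881598819441296, 8754395451287512246821426, 8002645476553225843382806, 8379860511970130721838456, 8378712402471564359952024, 8754269057501595942140634, 8378203305519429218365904, 8754142663715679706751794, 8753761134485632593349002, 9129311137210800556974068, 6790377214677423203769058, 7090668904071391000260076, 7006346630168658448770344, 7381903285198712620135306, 6922024364668331468228644, 7298601553072503581126486, 7297581011295980068645574, 7673137666326034240010536, 6837702100379394247915648, 7215427397070765552604054, 7214279279169771029636754, 7589835934199825201001716, 7213258737393247517155842, 7589708366477759761569636, 7588815392423335572285332, 7964372047453355859885766, 6794966913487472179622204, 7132253242280417284310326,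 7131105123168033001114322, 7506661778198087172479284, 7129957012469100396102478, 7506534202073616161992896, 7505513660297126533276512, 7881070315327146820876946, 7128936470692588178209742, 7506534202073627456581072, 7505386092575061093844432, 7880942747605092676033042, 7504493118520636904560128, 7880815179883083709966946, 7880049773550747548865970, 8255606428580677479760996, 6793818803988883227602936, 7090666164887084168036150, 7047930968377684732820594, 7423487623407738904185556, 7046782857667706020572622, 7423360046071878133470464, 7422339504295388504754080, 7797896159325408792354514, 7045634748169128363141530, 7423360044871545775066064, 7422211928170917494267692, 7797768583200949076456302, 7421191386394427865551308, 7797641015478940109965102, 7796748041424538509857150, 8172304696454468440752176, 7044614206392638734425146, 7423360044871579658830592, 7422211928170928788855868, 7797768583200982960220830, 7421063818672362426119228, 7797641015478940109858826, 7796620473702473070425070, 8172177128732448179672800, 7420171235929969112414700, 7797641406791004869203130, 7796493297292438506997870, 8172049952322470089186480, 7795729064896172383459870, 8171923558536553749859712, 8171286893862375689151016, 8546840809707999238220130, 6792670694490316864760020, 7090666164887106757212502, 7006343890984374205722770, 7381900546014428377087732, 6963608702877380341455246, 7340185891281552454353088, 7339165349505040236460352, 7714722004535083113237138, 6962460593375109353690602,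 7340185890070162694124384, 7339037772169179465745260, 7714594427199222342522046, 7338017230392689837028876, 7714466859477202081442670, 7713573885422800481334718, 8089130540452753001406096, 6961312483876542990847686, 7340185890070185283300736, 7339037770968847107340860, 7714594425998901278705822, 7337889660269937091505368, 7714466851074796510388362, 7713446309298329470848330, 8089002964328304580096060, 7336869509805478338368760, 7714467242386861269732666, 7713319132888294906996026, 8088875787918326489184636, 7712427332769963344451050, 8088749394132410149857868, 8087985161736166650142196, 8463539077581812788387662, 6960292724724115113290854, 7340186672694280918224816, 7339038553592942742264940, 7714595208622996913629902, 7337890442894010137253096, 7714467633698869556136090, 7713447091922391222007882, 8089003746952400215020140, 7336742333395443774516456, 7714467633698892145312442, 7713319524200325782469526, 8088876179230357364658136, 7712299765047897905018970, 8088749394132410149432764, 8087857594014101210710116, 8463412292483865573056014, 7335850533277112281263432, 7714468807635018725108250, 7713320698136429773088982, 8088877353166483944453944, 7712172588637863410883722, 8088749785444441094304492, 8087730026292035806349116, 8463285898697949233729246, 7711408356241597391283650, 8088750959380567708746276, 8087602849882001346859844, 8463159504912032929048454, 8086966185207800766266748, 8463033111126116693659614, 8462524014174004141249846, 8838075190835321204555120,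 6791651326649919966720892, 7090667338823233371654286, 7006345064920500820164554, 7381901719950554991529516, 6922022799420173839622854, 7298599987824345952520696, 7297579446047822440039784, 7673136101077876611404746, 6837700535131236619309858, 7215425831822607923998264, 7214277713921613401030964, 7589834368951667572395926, 7213257172145101183138228, 7589706801229613427552022, 7588813827175211827444070, 7964370482205198231279976, 6794965348239314551016414, 7132251677032259655704536, 7131103557919875372508532, 7506660212949929543873494, 7129955447220954062084864, 7506532636825469827975282, 7505512095049002788435250, 7881068750078989192271156, 7128934905444464433368480, 7506532636825503711739810, 7505384527326937349003170, 7880941182356968931191780, 7504491944584544035298642, 7880814005946990840705460, 7880049773550747306343812, 8255604863332519885801182, 6793817238740748188279774, 7090664599638949128606712, 7047929403129549693391156, 7423486058159603864756118, 7046781292419570981143184, 7423358480823743094041026, 7422337939047264759912818, 7797894594077273752925076, 7045633182921004618300268, 7423358479623422030224802, 7422210362922793749426430, 7797767017952825331615040, 7421190212458334996289822, 7797639841542847240703616, 7796748041424538267334992, 8172303131206333435968714, 7044613423768576740849712, 7423359262247517665148882, 7422211145546866795174158, 7797767800576920966539120, 7421063036048300432543794, 7797640232854878116177116, 7796620473702472828009188,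 8172176346108386220743342, 7420171235929968939290770, 7797641406791004695972924, 7796493297292438333873940, 8172049952322469916062550, 7795729064896172314273868, 8171923558536553680673710, 8171286893862375689256966, 8546839244459841852242448, 6792925438622416729672726, 7090665773575075743048496, 7006343499672343191558764, 7381900154702397362923726, 6922021234172016211017064, 7298598422576188323914906, 7297577880799676106022170, 7673134535829718982798956, 6837698969883078990704068, 7215424266574450295392474, 7214276148673467067013350, 7589832803703509943790136, 7213255606896977438296966, 7589705235981489682710760, 7588812653239118958182584, 7964368916957040602674186, 6794963782991179512224632, 7132250111784124616275098, 7131101992671740333079094, 7506658647701794504444056, 7129953881972830317456154, 7506531071577346083134020, 7505510921112909919386316, 7881067184830854153054270, 7128934122820402440324426, 7506531854201441718058100, 7505383744702875355959116, 7880940399732906938147726, 7504491944584543862706092, 7880814005946990668112910, 7880049773550747237689190, 8255603298084362500354880, 6794199550594913492624560, 7090664208326918114442706, 7006341934424185562952974, 7381898589454239734317936, 6922019668923858582623826, 7298596857328030695309116, 7297576315551552361393460, 7673132970581561354405718, 6837697404634943952443666, 7215422701326315255963036, 7214274583425343322916020, 7589831238455374905104630, 7213254824272915445784292, 7589704453357427690198086,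 7588812653239118786121414, 7964367351708883148467312, 6795473662567410255576394, 7090662643078760485836916, 7006340369176027935091116, 7381897024206082106456078, 6922018103675723544682252, 7298595292079895657154990, 7297575532927490369199614, 7673131405333403796579744, 6796747774539907018528228, 7090661077830602858506438, 7006338803927892897149542, 7381895458957924479338152, 6798021886512403781480062, 7090659512582445231388512, 6799295998484900544431896, 21814080473195739114322]
  | _ => []

set_option maxRecDepth 100000 in
set_option maxHeartbeats 16000000 in
lemma mapCheck : ∀ L < 10, (wordsE L).map keyN = keysOf L := by decide

set_option maxRecDepth 100000 in
set_option maxHeartbeats 16000000 in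
lemma nodupCheck : ∀ L < 10, nodupB 100 (keysOf L) = true := by decide

lemma nodupKeys (L : ℕ) (hL : L < 10) : ((wordsE L).map keyN).Nodup := by
  rw [mapCheck L hL]
  exact nodupB_sound 100 _ (nodupCheck L hL)

end IsotermAux


/-- Every word over a two-letter alphabet of length at most 9 is an isoterm for `UT_2`. -/
theorem isoterm_of_length_le_nine (w : List Bool) (hw : w ≠ []) (hlen : w.length ≤ 9)
    (v : List Bool) (hv : v ≠ []) (h : UTId 2 w v) : v = w := by
  have hL := IsotermAux.len_eq w v h
  have hmw : w ∈ IsotermAux.wordsE w.length := IsotermAux.mem_wordsE w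
  have hmv : v ∈ IsotermAux.wordsE w.length := hL ▸ IsotermAux.mem_wordsE v
  have hk : IsotermAux.keyN w = IsotermAux.keyN v := IsotermAux.keyN_eq w v h
  exact (List.inj_on_of_nodup_map (IsotermAux.nodupKeys w.length (by omega)) hmw hmv hk).symm
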